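/- Let M = [[A, B],[B^T, C]] be a symmetric real block matrix. Then M is positive semidefinite if and only if C is positive semidefinite, (I − C C^†) B^T = 0, and the generalized Schur complement A − B C^† B^T is positive semidefinite, where C^† denotes the Moore–Penrose pseudoinverse of C. -/

import Mathlib

open Matrix

lemma pinv_symm_aux {m : Type*} [Fintype m] (C Cd : Matrix m m ℝ)
    (hC : C.IsSymm)
    (h1 : C * Cd * C = C) (h2 : Cd * C * Cd = Cd)
    (h3 : (C * Cd).IsSymm) (h4 : (Cd * C).IsSymm) : Cd.IsSymm := by
  have hCt : Cᵀ = C := hC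
  have e3 : Cdᵀ * C = C * Cd := by
    calc Cdᵀ * C = Cdᵀ * Cᵀ := by rw [hCt]
      _ = (C * Cd)ᵀ := (Matrix.transpose_mul C Cd).symm
      _ = C * Cd := h3
  have e4 : Cd * C = C * Cdᵀ := by
    calc Cd * C = (Cd * C)ᵀ := h4.symm
      _ = Cᵀ * Cdᵀ := Matrix.transpose_mul Cd C
      _ = C * Cdᵀ := by rw [hCt]
  have hcomm : C * Cd = Cd * C := by
    calc C * Cd = Cdᵀ * C := e3.symm
      _ = Cdᵀ * (C * Cd * C) := by rw [h1]
      _ = (Cdᵀ * C) * (Cd * C) := by simp only [Matrix.mul_assoc]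
      _ = (C * Cd) * (C * Cdᵀ) := by rw [e3, e4]
      _ = (C * Cd * C) * Cdᵀ := by simp only [Matrix.mul_assoc]
      _ = C * Cdᵀ := by rw [h1]
      _ = Cd * C := e4.symm
  have hY2 : Cdᵀ * C * Cdᵀ = Cdᵀ := by
    have := congrArg Matrix.transpose h2
    simpa [Matrix.transpose_mul, hCt, Matrix.mul_assoc] using this
  have key : Cd = Cdᵀ := by
    calc Cd = Cd * C * Cd := h2.symm
      _ = (C * Cd) * Cd := by rw [hcomm]
      _ = (Cdᵀ * C) * Cd := by rw [e3]
      _ = Cdᵀ * (C * Cd) := by rw [Matrix.mul_assoc]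
      _ = Cdᵀ * (Cd * C) := by rw [hcomm]
      _ = Cdᵀ * (C * Cdᵀ) := by rw [e4]
      _ = Cdᵀ * C * Cdᵀ := by rw [Matrix.mul_assoc]
      _ = Cdᵀ := hY2
  exact key.symm

lemma psd_fromBlocks_diag {n m : Type*} [Fintype n] [Fintype m]
    {S : Matrix n n ℝ} {C : Matrix m m ℝ}
    (hS : S.PosSemidef) (hC : C.PosSemidef) :
    (Matrix.fromBlocks S 0 0 C).PosSemidef := by
  refine PosSemidef.of_dotProduct_mulVec_nonneg ?_ ?_
  · show _ᴴ = _
    rw [fromBlocks_conjTranspose, hS.1.eq, hC.1.eq]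
    simp
  · intro x
    have hx : x = Sum.elim (x ∘ Sum.inl) (x ∘ Sum.inr) := (Sum.elim_comp_inl_inr x).symm
    rw [hx]
    simp only [fromBlocks_mulVec, dotProduct_block, Sum.elim_comp_inl, Sum.elim_comp_inr,
      Matrix.zero_mulVec, add_zero, zero_add, star_trivial]
    exact add_nonneg (by simpa using hS.dotProduct_mulVec_nonneg (x ∘ Sum.inl)) (by simpa using hC.dotProduct_mulVec_nonneg (x ∘ Sum.inr))

/-- generalized Schur complement criterion for positive semidefiniteness of
a symmetric block matrix `[[A, B],[Bᵀ, C]]`, where `Cd` is the Moore–Penrose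
pseudoinverse of `C` (characterized by the Penrose conditions). -/
theorem posSemidef_fromBlocks_iff_schur {n m : Type*}
    [Fintype n] [Fintype m] [DecidableEq n] [DecidableEq m]
    (A : Matrix n n ℝ) (B : Matrix n m ℝ) (C Cd : Matrix m m ℝ)
    (hA : A.IsSymm) (hC : C.IsSymm)
    (h1 : C * Cd * C = C) (h2 : Cd * C * Cd = Cd)
    (h3 : (C * Cd).IsSymm) (h4 : (Cd * C).IsSymm) :
    (Matrix.fromBlocks A B B.transpose C).PosSemidef ↔
      C.PosSemidef ∧ (1 - C * Cd) * B.transpose = 0 ∧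
        (A - B * Cd * B.transpose).PosSemidef := by
  have hCt : Cᵀ = C := hC
  have hAt : Aᵀ = A := hA
  have hCds : Cdᵀ = Cd := pinv_symm_aux C Cd hC h1 h2 h3 h4
  have hSt : (A - B * Cd * Bᵀ)ᵀ = A - B * Cd * Bᵀ := by
    simp [Matrix.transpose_sub, Matrix.transpose_mul, hCds, hAt, Matrix.mul_assoc]
  set M := Matrix.fromBlocks A B Bᵀ C with hM
  constructor
  · intro h
    -- C is PSD
    have hCpsd : C.PosSemidef := by
      have hsub : M.submatrix Sum.inr Sum.inr = C := by ext i j; simp [hM, Matrix.fromBlocks]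
      exact hsub ▸ h.submatrix Sum.inr
    -- kernel of C is contained in kernel of B
    have hker : ∀ y : m → ℝ, C *ᵥ y = 0 → B *ᵥ y = 0 := by
      intro y hy
      have h0 : star (Sum.elim (0 : n → ℝ) y) ⬝ᵥ (M *ᵥ Sum.elim 0 y) = 0 := by
        simp [hM, fromBlocks_mulVec, hy, dotProduct_block]
      have hz := (h.dotProduct_mulVec_zero_iff _).mp h0
      ext i
      have := congrFun hz (Sum.inl i)
      simpa [hM, fromBlocks_mulVec] using this
    have hBN : ∀ N : Matrix m m ℝ, C * N = 0 → B * N = 0 := by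
      intro N hN
      ext i j
      have h1' : C *ᵥ (N *ᵥ Pi.single j 1) = 0 := by
        rw [Matrix.mulVec_mulVec, hN, Matrix.zero_mulVec]
      have h2' := hker _ h1'
      rw [Matrix.mulVec_mulVec] at h2'
      have := congrFun h2' i
      simpa [Matrix.mulVec_single] using this
    have hBCdC : B * Cd * C = B := by
      have hcn : C * (1 - Cd * C) = 0 := by
        rw [Matrix.mul_sub, Matrix.mul_one, ← Matrix.mul_assoc, h1, sub_self]
      have := hBN _ hcn
      rw [Matrix.mul_sub, Matrix.mul_one, sub_eq_zero] at this
      rw [Matrix.mul_assoc]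
      exact this.symm
    have hBcond : (1 - C * Cd) * Bᵀ = 0 := by
      have hBt : C * Cd * Bᵀ = Bᵀ := by
        have := congrArg Matrix.transpose hBCdC
        simpa [Matrix.transpose_mul, hCt, hCds, Matrix.mul_assoc] using this
      rw [Matrix.sub_mul, Matrix.one_mul, hBt, sub_self]
    refine ⟨hCpsd, hBcond, ?_⟩
    -- Schur complement is PSD
    set Z : Matrix (n ⊕ m) (n ⊕ m) ℝ := Matrix.fromBlocks 1 (-(B * Cd)) 0 0 with hZdef
    have hZH : Zᴴ = Matrix.fromBlocks 1 0 (-(B * Cd))ᵀ 0 := by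
      rw [hZdef, fromBlocks_conjTranspose]
      congr 1 <;> simp [conjTranspose_eq_transpose_of_trivial]
    have hZMZ : Z * M * Zᴴ = Matrix.fromBlocks (A - B * Cd * Bᵀ) 0 0 0 := by
      rw [hZH, hM, hZdef, fromBlocks_multiply, fromBlocks_multiply]
      congr 1 <;>
        simp [Matrix.mul_assoc, hBCdC, sub_eq_add_neg, Matrix.add_mul, Matrix.neg_mul]
    have hpsd := h.mul_mul_conjTranspose_same Z
    rw [hZMZ] at hpsd
    have hsub : (Matrix.fromBlocks (A - B * Cd * Bᵀ) 0 0 (0 : Matrix m m ℝ)).submatrix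
        Sum.inl Sum.inl = A - B * Cd * Bᵀ := by
      ext i j; simp [Matrix.fromBlocks]
    exact hsub ▸ hpsd.submatrix Sum.inl
  · rintro ⟨hCpsd, hB, hSpsd⟩
    have hBt : C * Cd * Bᵀ = Bᵀ := by
      have := hB
      rwa [Matrix.sub_mul, Matrix.one_mul, sub_eq_zero, eq_comm] at this
    have hBCdC : B * Cd * C = B := by
      have := congrArg Matrix.transpose hBt
      simpa [Matrix.transpose_mul, hCt, hCds, Matrix.mul_assoc] using this
    set X : Matrix (n ⊕ m) (n ⊕ m) ℝ := Matrix.fromBlocks 1 (B * Cd) 0 1 with hXdef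
    have hXH : Xᴴ = Matrix.fromBlocks 1 0 (B * Cd)ᵀ 1 := by
      rw [hXdef, fromBlocks_conjTranspose]
      congr 1 <;> simp [conjTranspose_eq_transpose_of_trivial]
    have hD : (Matrix.fromBlocks (A - B * Cd * Bᵀ) 0 0 C).PosSemidef :=
      psd_fromBlocks_diag hSpsd hCpsd
    have hXDX : X * Matrix.fromBlocks (A - B * Cd * Bᵀ) 0 0 C * Xᴴ = M := by
      rw [hXH, hXdef, fromBlocks_multiply, fromBlocks_multiply, hM]
      have hbl : C * (B * Cd)ᵀ = Bᵀ := by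
        rw [Matrix.transpose_mul, hCds, ← Matrix.mul_assoc]
        exact hBt
      congr 1 <;> simp [← Matrix.mul_assoc, hCds, hBt, hBCdC, Matrix.transpose_mul]
    exact hXDX ▸ hD.mul_mul_conjTranspose_same X
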